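/- Let K be a compact Hausdorff space and let μ be a positive regular Borel (Radon) measure on K such that L¹(μ) is non-separable. Then for every δ with 0 < δ < √2 − 1 there exists a set A of norm-one functions in C(K), of cardinality equal to the density character of L¹(μ), such that ‖f − g‖ ≥ 1 + δ for all distinct f, g ∈ A. In particular, the unit sphere of C(K) contains an uncountable (1+δ)-separated subset. -/

import Mathlib

open Cardinal MeasureTheory

/-- The density character of a topological space: the least cardinality of a
dense subset. -/
noncomputable def densityCharacter (X : Type*) [TopologicalSpace X] : Cardinal :=
  sInf { c : Cardinal | ∃ s : Set X, Dense s ∧ #s = c }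

set_option linter.unusedSectionVars false
set_option linter.unusedVariables false
set_option maxHeartbeats 1000000

open Set
open scoped symmDiff ENNReal

namespace SepL1

variable {K : Type*} [MeasurableSpace K] {μ : Measure K}

/-- `D` is a `c`-dense family of measurable subsets of `S`. -/
def CD (μ : Measure K) (S : Set K) (c : ℝ≥0∞) (D : Set (Set K)) : Prop :=
  (∀ A ∈ D, MeasurableSet A ∧ A ⊆ S) ∧
  ∀ E : Set K, MeasurableSet E → E ⊆ S → ∃ A ∈ D, μ (E ∆ A) ≤ c

/-- there is `c > 0` such that every `c`-dense family of subsets of `S` has size `≥ lam`. -/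
def Q (μ : Measure K) (S : Set K) (lam : Cardinal) : Prop :=
  ∃ c : ℝ≥0∞, 0 < c ∧ ∀ D : Set (Set K), CD μ S c D → lam ≤ #D

lemma CD.mono_c {S : Set K} {c c' : ℝ≥0∞} {D : Set (Set K)} (hcc : c ≤ c')
    (h : CD μ S c D) : CD μ S c' D := by
  refine ⟨h.1, fun E hE hES => ?_⟩
  obtain ⟨A, hA, hd⟩ := h.2 E hE hES
  exact ⟨A, hA, hd.trans hcc⟩

lemma not_Q_iff {S : Set K} {lam : Cardinal} :
    ¬ Q μ S lam ↔ ∀ c : ℝ≥0∞, 0 < c → ∃ D : Set (Set K), CD μ S c D ∧ #D < lam := by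
  unfold Q
  push_neg
  rfl

lemma symmDiff_inter_subset {E A S : Set K} (hE : E ⊆ S) : E ∆ (A ∩ S) ⊆ E ∆ A := by
  intro x hx
  rw [Set.mem_symmDiff] at hx ⊢
  rcases hx with ⟨h1, h2⟩ | ⟨h1, h2⟩
  · exact Or.inl ⟨h1, fun hxA => h2 ⟨hxA, hE h1⟩⟩
  · exact Or.inr ⟨h1.1, h2⟩

lemma Q.mono_set {S S' : Set K} {lam : Cardinal} (hS : MeasurableSet S) (hSS' : S ⊆ S')
    (h : Q μ S lam) : Q μ S' lam := by
  obtain ⟨c, hc, hQ⟩ := h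
  refine ⟨c, hc, fun D hD => ?_⟩
  have hCD : CD μ S c ((fun A => A ∩ S) '' D) := by
    constructor
    · rintro A ⟨B, hB, rfl⟩
      exact ⟨(hD.1 B hB).1.inter hS, inter_subset_right⟩
    · intro E hE hES
      obtain ⟨A, hA, hd⟩ := hD.2 E hE (hES.trans hSS')
      exact ⟨A ∩ S, mem_image_of_mem _ hA,
        le_trans (measure_mono (symmDiff_inter_subset hES)) hd⟩
  exact (hQ _ hCD).trans Cardinal.mk_image_le

lemma Q.mono_lam {S : Set K} {lam lam' : Cardinal} (hl : lam' ≤ lam)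
    (h : Q μ S lam) : Q μ S lam' := by
  obtain ⟨c, hc, hQ⟩ := h
  exact ⟨c, hc, fun D hD => hl.trans (hQ D hD)⟩

lemma Q.exists_split {S : Set K} {lam : Cardinal} (hS : MeasurableSet S) (hlam : ℵ₀ ≤ lam)
    (h : Q μ S lam) :
    ∃ E, MeasurableSet E ∧ E ⊆ S ∧ 0 < μ E ∧ 0 < μ (S \ E) := by
  by_contra hcon
  push_neg at hcon
  obtain ⟨c, hc, hQ⟩ := h
  have hCD : CD μ S c {∅, S} := by
    constructor
    · rintro A (rfl | rfl)
      · exact ⟨MeasurableSet.empty, empty_subset _⟩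
      · exact ⟨hS, subset_rfl⟩
    · intro E hE hES
      rcases eq_or_ne (μ E) 0 with hE0 | hE0
      · refine ⟨∅, Or.inl rfl, ?_⟩
        have he : E ∆ ∅ = E := by simp
        rw [he]
        exact hE0.le.trans zero_le
      · have hSE : μ (S \ E) ≤ 0 := hcon E hE hES (pos_iff_ne_zero.mpr hE0)
        refine ⟨S, Or.inr rfl, ?_⟩
        have hsub : E ∆ S ⊆ S \ E := by
          intro x hx
          rw [Set.mem_symmDiff] at hx
          rcases hx with ⟨h1, h2⟩ | ⟨h1, h2⟩
          · exact absurd (hES h1) h2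
          · exact ⟨h1, h2⟩
        exact le_trans (measure_mono hsub) (hSE.trans zero_le)
  have h2 : lam ≤ #({∅, S} : Set (Set K)) := hQ _ hCD
  have h3 : #({∅, S} : Set (Set K)) ≤ 2 := by
    have := Cardinal.mk_insert_le (s := ({S} : Set (Set K))) (a := (∅ : Set K))
    simp only [Cardinal.mk_singleton] at this
    exact this.trans_eq one_add_one_eq_two
  have h4 : (ℵ₀ : Cardinal) ≤ 2 := hlam.trans (h2.trans h3)
  exact (Cardinal.nat_lt_aleph0 2).not_ge (by exact_mod_cast h4)

lemma Q.pos_measure {S : Set K} {lam : Cardinal} (hS : MeasurableSet S) (hlam : ℵ₀ ≤ lam)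
    (h : Q μ S lam) : 0 < μ S := by
  obtain ⟨E, _, hES, hE, _⟩ := h.exists_split hS hlam
  exact hE.trans_le (measure_mono hES)

lemma notQ_union {A B : Set K} {lam : Cardinal} (hA : MeasurableSet A) (hB : MeasurableSet B)
    (hlam : ℵ₀ < lam) (ha : ¬ Q μ A lam) (hb : ¬ Q μ B lam) : ¬ Q μ (A ∪ B) lam := by
  have hb' : ¬ Q μ (B \ A) lam := fun h => hb (h.mono_set (hB.diff hA) diff_subset)
  rw [not_Q_iff] at ha hb' ⊢
  intro c hc
  obtain ⟨Da, hDa, hDalt⟩ := ha (c / 2) (ENNReal.half_pos hc.ne')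
  obtain ⟨Db, hDb, hDblt⟩ := hb' (c / 2) (ENNReal.half_pos hc.ne')
  refine ⟨(fun p : Set K × Set K => p.1 ∪ p.2) '' (Da ×ˢ Db), ⟨?_, ?_⟩, ?_⟩
  · rintro X ⟨⟨X1, X2⟩, ⟨h1, h2⟩, rfl⟩
    obtain ⟨m1, s1⟩ := hDa.1 X1 h1
    obtain ⟨m2, s2⟩ := hDb.1 X2 h2
    exact ⟨m1.union m2, union_subset (s1.trans subset_union_left)
      (s2.trans (diff_subset.trans subset_union_right))⟩
  · intro E hE hES
    obtain ⟨X, hX, hdX⟩ := hDa.2 (E ∩ A) (hE.inter hA) inter_subset_right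
    obtain ⟨Y, hY, hdY⟩ := hDb.2 (E \ A) (hE.diff hA) (fun x hx =>
      ⟨(hES hx.1).resolve_left hx.2, hx.2⟩)
    refine ⟨X ∪ Y, ⟨⟨X, Y⟩, ⟨hX, hY⟩, rfl⟩, ?_⟩
    have hXA : X ⊆ A := (hDa.1 X hX).2
    have hYBA : Y ⊆ B \ A := (hDb.1 Y hY).2
    have hsub : E ∆ (X ∪ Y) ⊆ ((E ∩ A) ∆ X) ∪ ((E \ A) ∆ Y) := by
      intro x hx
      rw [Set.mem_symmDiff] at hx
      rcases hx with ⟨h1, h2⟩ | ⟨h1, h2⟩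
      · by_cases hxA : x ∈ A
        · exact Or.inl (Or.inl ⟨⟨h1, hxA⟩, fun h => h2 (Or.inl h)⟩)
        · exact Or.inr (Or.inl ⟨⟨h1, hxA⟩, fun h => h2 (Or.inr h)⟩)
      · rcases h1 with h1 | h1
        · exact Or.inl (Or.inr ⟨h1, fun h => h2 h.1⟩)
        · refine Or.inr (Or.inr ⟨h1, fun h => h2 h.1⟩)
    calc μ (E ∆ (X ∪ Y)) ≤ μ (((E ∩ A) ∆ X) ∪ ((E \ A) ∆ Y)) := measure_mono hsub
      _ ≤ μ ((E ∩ A) ∆ X) + μ ((E \ A) ∆ Y) := measure_union_le _ _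
      _ ≤ c / 2 + c / 2 := add_le_add hdX hdY
      _ = c := ENNReal.add_halves c
  · refine lt_of_le_of_lt Cardinal.mk_image_le ?_
    calc #(↥(Da ×ˢ Db)) = #(↥Da × ↥Db) := Cardinal.mk_congr (Equiv.Set.prod Da Db)
      _ = #↥Da * #↥Db := by rw [Cardinal.mk_prod]; simp
      _ < lam := Cardinal.mul_lt_of_lt hlam.le hDalt hDblt

lemma notQ_biUnion_range {B : ℕ → Set K} {lam : Cardinal} (hmeas : ∀ n, MeasurableSet (B n))
    (hlam : ℵ₀ < lam) (h : ∀ n, ¬ Q μ (B n) lam) (N : ℕ) :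
    ¬ Q μ (⋃ k ∈ Finset.range N, B k) lam := by
  induction N with
  | zero =>
      intro hQ
      have := hQ.pos_measure (by simp) hlam.le
      simp at this
  | succ n ih =>
      have : (⋃ k ∈ Finset.range (n+1), B k) = (⋃ k ∈ Finset.range n, B k) ∪ B n := by
        ext x; simp [Finset.mem_range, Nat.lt_succ_iff_lt_or_eq]
        constructor
        · rintro ⟨i, hi, hx⟩
          rcases hi.lt_or_eq with hi | rfl
          · exact Or.inl ⟨i, hi, hx⟩
          · exact Or.inr hx
        · rintro (⟨i, hi, hx⟩ | hx)
          · exact ⟨i, hi.le, hx⟩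
          · exact ⟨n, le_rfl, hx⟩
      rw [this]
      exact notQ_union (MeasurableSet.biUnion (Set.to_countable _) (fun k _ => hmeas k))
        (hmeas n) hlam ih (h n)

lemma notQ_iUnion {B : ℕ → Set K} {lam : Cardinal} (hmeas : ∀ n, MeasurableSet (B n))
    (hdis : Pairwise (Function.onFun Disjoint B)) (hfin : μ (⋃ n, B n) ≠ ∞)
    (hlam : ℵ₀ < lam) (h : ∀ n, ¬ Q μ (B n) lam) : ¬ Q μ (⋃ n, B n) lam := by
  rw [not_Q_iff]
  intro c hc
  have hsum : (∑' n, μ (B n)) ≠ ∞ := by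
    rwa [← measure_iUnion hdis hmeas]
  have htail : ∀ᶠ N in Filter.atTop, (∑' k, μ (B (k + N))) < c / 2 :=
    (ENNReal.tendsto_sum_nat_add _ hsum).eventually_lt_const (ENNReal.half_pos hc.ne')
  obtain ⟨N, hN⟩ := htail.exists
  obtain ⟨D, hD, hDlt⟩ := (not_Q_iff.mp (notQ_biUnion_range hmeas hlam h N)) (c / 2)
    (ENNReal.half_pos hc.ne')
  refine ⟨D, ⟨?_, ?_⟩, hDlt⟩
  · intro A hA
    refine ⟨(hD.1 A hA).1, (hD.1 A hA).2.trans ?_⟩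
    exact Set.iUnion₂_subset fun k _ => Set.subset_iUnion B k
  · intro E hE hES
    obtain ⟨A, hA, hdA⟩ := hD.2 (E ∩ ⋃ k ∈ Finset.range N, B k)
      (hE.inter (MeasurableSet.biUnion (Set.to_countable _) (fun k _ => hmeas k)))
      Set.inter_subset_right
    refine ⟨A, hA, ?_⟩
    have hAhead : A ⊆ ⋃ k ∈ Finset.range N, B k := (hD.1 A hA).2
    have hsub : E ∆ A ⊆ ((E ∩ ⋃ k ∈ Finset.range N, B k) ∆ A) ∪ (⋃ k, B (k + N)) := by
      intro x hx
      rw [Set.mem_symmDiff] at hx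
      rcases hx with ⟨h1, h2⟩ | ⟨h1, h2⟩
      · obtain ⟨_, ⟨j, rfl⟩, hxj⟩ := hES h1
        by_cases hj : j < N
        · exact Or.inl (Or.inl ⟨⟨h1, Set.mem_biUnion (Finset.mem_range.mpr hj) hxj⟩, h2⟩)
        · refine Or.inr ⟨_, ⟨j - N, rfl⟩, ?_⟩
          show x ∈ B (j - N + N)
          rwa [Nat.sub_add_cancel (not_lt.mp hj)]
      · exact Or.inl (Or.inr ⟨h1, fun hmem => h2 hmem.1⟩)
    calc μ (E ∆ A) ≤ μ (((E ∩ ⋃ k ∈ Finset.range N, B k) ∆ A) ∪ (⋃ k, B (k + N))) :=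
          measure_mono hsub
      _ ≤ μ ((E ∩ ⋃ k ∈ Finset.range N, B k) ∆ A) + μ (⋃ k, B (k + N)) := measure_union_le _ _
      _ ≤ c / 2 + ∑' k, μ (B (k + N)) := add_le_add hdA (measure_iUnion_le _)
      _ ≤ c / 2 + c / 2 := add_le_add le_rfl hN.le
      _ = c := ENNReal.add_halves c


lemma notQ_empty {lam : Cardinal} (hlam : ℵ₀ ≤ lam) : ¬ Q μ (∅ : Set K) lam := by
  intro h
  have := h.pos_measure MeasurableSet.empty hlam
  simp at this

lemma Q_or_of_union {A B : Set K} {lam : Cardinal} (hA : MeasurableSet A) (hB : MeasurableSet B)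
    (hlam : ℵ₀ < lam) (h : Q μ (A ∪ B) lam) : Q μ A lam ∨ Q μ B lam := by
  by_contra hcon
  push_neg at hcon
  exact notQ_union hA hB hlam hcon.1 hcon.2 h

lemma stepEx {T : Set K} (hT : MeasurableSet T) (hTfin : μ T ≠ ∞) {lam : ℕ → Cardinal}
    (hmono : Monotone lam) (hlam : ∀ m, ℵ₀ < lam m) (n : ℕ)
    (hQT : ∀ m, n ≤ m → Q μ T (lam m)) :
    ∃ p : Set K × Set K, MeasurableSet p.1 ∧ MeasurableSet p.2 ∧ p.1 ⊆ T ∧ p.2 ⊆ T ∧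
      Disjoint p.1 p.2 ∧ Q μ p.1 (lam n) ∧ ∀ m, n + 1 ≤ m → Q μ p.2 (lam m) := by
  classical
  set Bfam : Set (Set K) := {V | V ⊆ T ∧ MeasurableSet V ∧ ¬ Q μ V (lam n)} with hBfam
  have hne : (μ '' Bfam).Nonempty :=
    ⟨μ ∅, Set.mem_image_of_mem μ
      (show (∅ : Set K) ∈ Bfam from ⟨empty_subset _, MeasurableSet.empty, notQ_empty (hlam n).le⟩)⟩
  obtain ⟨u, hu_mono, hu_tendsto, hu_mem⟩ :=
    exists_seq_tendsto_sSup hne (OrderTop.bddAbove _)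
  choose W hW_mem hW_eq using hu_mem
  have hWsub : ∀ k, W k ⊆ T := fun k => (hW_mem k).1
  have hWmeas : ∀ k, MeasurableSet (W k) := fun k => (hW_mem k).2.1
  have hWnQ : ∀ k, ¬ Q μ (W k) (lam n) := fun k => (hW_mem k).2.2
  set U : Set K := ⋃ k, W k with hU
  have hUmeas : MeasurableSet U := MeasurableSet.iUnion hWmeas
  have hUsub : U ⊆ T := Set.iUnion_subset hWsub
  have hUfin : μ U ≠ ∞ := fun h => hTfin (top_le_iff.mp (h ▸ measure_mono hUsub))
  have hUnQ : ¬ Q μ U (lam n) := by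
    have hD : ∀ k, ¬ Q μ (disjointed W k) (lam n) := fun k hQk =>
      hWnQ k (hQk.mono_set (MeasurableSet.disjointed hWmeas k) (disjointed_subset W k))
    have := notQ_iUnion (fun k => MeasurableSet.disjointed hWmeas k)
      (disjoint_disjointed W) (by rwa [iUnion_disjointed]) (hlam n) hD
    rwa [iUnion_disjointed] at this
  have hUmem : U ∈ Bfam := ⟨hUsub, hUmeas, hUnQ⟩
  have hUle : μ U ≤ sSup (μ '' Bfam) := le_sSup (Set.mem_image_of_mem μ hUmem)
  have hUge : sSup (μ '' Bfam) ≤ μ U := by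
    refine le_of_tendsto' hu_tendsto fun k => ?_
    rw [← hW_eq k]
    exact measure_mono (Set.subset_iUnion W k)
  set R : Set K := T \ U with hR
  have hRmeas : MeasurableSet R := hT.diff hUmeas
  have hTUR : T = U ∪ R := (Set.union_diff_cancel hUsub).symm
  have hQR : ∀ m, n ≤ m → Q μ R (lam m) := by
    intro m hm
    have hUnQm : ¬ Q μ U (lam m) := fun h => hUnQ (h.mono_lam (hmono hm))
    rcases Q_or_of_union hUmeas hRmeas (hlam m) (hTUR ▸ hQT m hm) with h | h
    · exact absurd h hUnQm
    · exact h
  have hered : ∀ P, MeasurableSet P → P ⊆ R → 0 < μ P → Q μ P (lam n) := by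
    intro P hPmeas hPR hPpos
    by_contra hnP
    have hdisj : Disjoint U P := (Set.disjoint_sdiff_right).mono_right hPR
    have hmem : U ∪ P ∈ Bfam :=
      ⟨Set.union_subset hUsub (hPR.trans diff_subset),
        hUmeas.union hPmeas, notQ_union hUmeas hPmeas (hlam n) hUnQ hnP⟩
    have : μ U + μ P ≤ μ U := by
      rw [← measure_union hdisj hPmeas]
      exact (le_sSup (Set.mem_image_of_mem μ hmem)).trans hUge
    have hP0 : μ P ≤ 0 := by
      have := ENNReal.le_of_add_le_add_left hUfin (this.trans_eq (add_zero _).symm)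
      exact this
    exact absurd (hP0.trans_lt hPpos).false (by simp)
  obtain ⟨E, hEmeas, hER, hEpos, hREpos⟩ := (hQR n le_rfl).exists_split hRmeas (hlam n).le
  have hQ1 : Q μ E (lam n) := hered E hEmeas hER hEpos
  have hQ2 : Q μ (R \ E) (lam n) := hered _ (hRmeas.diff hEmeas) diff_subset hREpos
  have hRsplit : R = E ∪ (R \ E) := (Set.union_diff_cancel hER).symm
  have hdisjE : Disjoint E (R \ E) := Set.disjoint_sdiff_right
  by_cases hall : ∀ m, n + 1 ≤ m → Q μ (R \ E) (lam m)
  · exact ⟨(E, R \ E), hEmeas, hRmeas.diff hEmeas, hER.trans diff_subset,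
      (diff_subset.trans diff_subset), hdisjE, hQ1, hall⟩
  · push_neg at hall
    obtain ⟨m₂, hm₂, hnQ2⟩ := hall
    have hall1 : ∀ m, n + 1 ≤ m → Q μ E (lam m) := by
      intro m hm
      have hM : Q μ R (lam (max m m₂)) := hQR _ ((hm.trans (le_max_left m m₂)).trans' (by omega))
      rcases Q_or_of_union hEmeas (hRmeas.diff hEmeas) (hlam _) (hRsplit ▸ hM) with h | h
      · exact h.mono_lam (hmono (le_max_left m m₂))
      · exact absurd (h.mono_lam (hmono (le_max_right m m₂))) hnQ2
    exact ⟨(R \ E, E), hRmeas.diff hEmeas, hEmeas, diff_subset.trans diff_subset,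
      hER.trans diff_subset, hdisjE.symm, hQ2, hall1⟩


lemma exists_regions (hfin : μ (Set.univ : Set K) ≠ ∞) {lam : ℕ → Cardinal}
    (hmono : Monotone lam) (hlam : ∀ m, ℵ₀ < lam m) (hQ0 : ∀ m, Q μ Set.univ (lam m)) :
    ∃ S : ℕ → Set K, (∀ n, MeasurableSet (S n)) ∧ Pairwise (Function.onFun Disjoint S) ∧
      ∀ n, Q μ (S n) (lam n) := by
  classical
  let I : ℕ → Set K × Set K → Prop := fun n q =>
    MeasurableSet q.1 ∧ MeasurableSet q.2 ∧ Disjoint q.1 q.2 ∧ Q μ q.1 (lam n) ∧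
    ∀ m, n + 1 ≤ m → Q μ q.2 (lam m)
  have stepP : ∀ n (q : Set K × Set K), I n q →
      ∃ p : Set K × Set K, I (n+1) p ∧ p.1 ⊆ q.2 ∧ p.2 ⊆ q.2 := by
    intro n q hq
    have hfin2 : μ q.2 ≠ ∞ := fun h => hfin (top_le_iff.mp (h ▸ measure_mono (subset_univ _)))
    obtain ⟨p, h1, h2, h3, h4, h5, h6, h7⟩ :=
      stepEx hq.2.1 hfin2 hmono hlam (n+1) (fun m hm => hq.2.2.2.2 m hm)
    exact ⟨p, ⟨h1, h2, h5, h6, h7⟩, h3, h4⟩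
  have init : ∃ p : Set K × Set K, I 0 p := by
    obtain ⟨p, h1, h2, h3, h4, h5, h6, h7⟩ :=
      stepEx MeasurableSet.univ hfin hmono hlam 0 (fun m _ => hQ0 m)
    exact ⟨p, h1, h2, h5, h6, h7⟩
  let F : ∀ n : ℕ, {q : Set K × Set K // I n q} := fun n => Nat.rec
    ⟨init.choose, init.choose_spec⟩
    (fun k Fk => ⟨(stepP k Fk.1 Fk.2).choose, (stepP k Fk.1 Fk.2).choose_spec.1⟩) n
  have hFsucc : ∀ n, (F (n+1)).1.1 ⊆ (F n).1.2 ∧ (F (n+1)).1.2 ⊆ (F n).1.2 := fun n =>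
    ⟨(stepP n (F n).1 (F n).2).choose_spec.2.1, (stepP n (F n).1 (F n).2).choose_spec.2.2⟩
  have hchain : ∀ n m, n ≤ m → (F m).1.2 ⊆ (F n).1.2 := by
    intro n m h
    induction m with
    | zero =>
        have : n = 0 := Nat.le_zero.mp h
        subst this; exact subset_rfl
    | succ k ih =>
        rcases Nat.eq_or_lt_of_le h with h' | h'
        · subst h'; exact subset_rfl
        · exact (hFsucc k).2.trans (ih (Nat.lt_succ_iff.mp h'))
  have hSsubT : ∀ n m, n < m → (F m).1.1 ⊆ (F n).1.2 := by
    intro n m h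
    cases m with
    | zero => omega
    | succ k => exact (hFsucc k).1.trans (hchain n k (by omega))
  refine ⟨fun n => (F n).1.1, fun n => (F n).2.1, ?_, fun n => (F n).2.2.2.2.1⟩
  intro i j hij
  rcases lt_or_gt_of_ne hij with h | h
  · exact ((F i).2.2.2.1.mono_right (hSsubT i j h))
  · exact ((F j).2.2.2.1.mono_right (hSsubT j i h)).symm


section Transfer

variable [IsFiniteMeasure μ]

/-- abbreviation for the `Lp` indicator with value 1. -/
noncomputable def indLp (μ : Measure K) [IsFiniteMeasure μ] {A : Set K}
    (hA : MeasurableSet A) : Lp ℝ 1 μ :=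
  indicatorConstLp 1 hA (measure_ne_top μ A) (1 : ℝ)

lemma norm_indLp_le {A : Set K} (hA : MeasurableSet A) :
    ‖indLp μ hA‖ ≤ (μ Set.univ).toReal := by
  rw [indLp, norm_indicatorConstLp one_ne_zero ENNReal.one_ne_top]
  simp only [norm_one, one_mul, ENNReal.toReal_one, div_one, Real.rpow_one]
  exact ENNReal.toReal_mono (measure_ne_top μ _) (measure_mono (Set.subset_univ A))

lemma norm_indLp_sub_le {A B : Set K} (hA : MeasurableSet A) (hB : MeasurableSet B) :
    ‖indLp μ hA - indLp μ hB‖ ≤ (μ (A ∆ B)).toReal := by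
  rw [indLp, indLp, indicatorConstLp, indicatorConstLp, ← MemLp.toLp_sub, Lp.norm_toLp]
  have hpt : ∀ x, ‖(A.indicator (fun _ => (1:ℝ)) - B.indicator fun _ => (1:ℝ)) x‖ ≤
      ‖(A ∆ B).indicator (fun _ => (1:ℝ)) x‖ := by
    intro x
    by_cases hxA : x ∈ A <;> by_cases hxB : x ∈ B <;>
      simp [Set.indicator_apply, hxA, hxB, Set.mem_symmDiff]
  have h1 := eLpNorm_mono (p := 1) (μ := μ) hpt
  have h2 : eLpNorm ((A ∆ B).indicator fun _ => (1:ℝ)) 1 μ = μ (A ∆ B) := by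
    rw [eLpNorm_indicator_const (hA.symmDiff hB) one_ne_zero ENNReal.one_ne_top]
    simp
  exact ENNReal.toReal_mono (by simp [measure_ne_top]) (h1.trans_eq h2)

lemma indLp_const_eq_smul {A : Set K} (hA : MeasurableSet A) (c : ℝ) :
    indicatorConstLp 1 hA (measure_ne_top μ A) c = c • indLp μ hA := by
  apply Lp.ext
  filter_upwards [indicatorConstLp_coeFn (p := 1) (hs := hA) (hμs := measure_ne_top μ A) (c := c),
    Lp.coeFn_smul c (indLp μ hA),
    indicatorConstLp_coeFn (p := 1) (hs := hA) (hμs := measure_ne_top μ A) (c := (1:ℝ))]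
    with x h1 h2 h3
  rw [h1, h2]
  show A.indicator (fun _ => c) x = c • (indLp μ hA) x
  rw [show ((indLp μ hA) : K → ℝ) x = A.indicator (fun _ => (1:ℝ)) x from h3]
  by_cases hx : x ∈ A <;> simp [Set.indicator_apply, hx]

lemma densityCharacter_le_of_family {D : Set (Set K)}
    (hmeas : ∀ A ∈ D, MeasurableSet A)
    (happ : ∀ E : Set K, MeasurableSet E → ∀ c : ℝ≥0∞, 0 < c → ∃ A ∈ D, μ (E ∆ A) ≤ c) :
    densityCharacter (Lp ℝ 1 μ) ≤ max ℵ₀ #D := by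
  classical
  haveI : Fact ((1:ℝ≥0∞) ≤ 1) := ⟨le_rfl⟩
  set g : ↥D → Lp ℝ 1 μ := fun A => indLp μ (hmeas A.1 A.2) with hg
  set f : List (ℚ × ↥D) → Lp ℝ 1 μ :=
    fun l => (l.map fun p => (p.1 : ℝ) • g p.2).sum with hf
  have hf_add : ∀ l₁ l₂, f (l₁ ++ l₂) = f l₁ + f l₂ := by
    intro l₁ l₂; simp [hf]
  have hf_neg : ∀ l, f (l.map fun p => (-p.1, p.2)) = - f l := by
    intro l
    induction l with
    | nil => simp [hf]
    | cons a l ih =>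
        simp only [hf, List.map_cons, List.sum_cons, neg_add] at *
        rw [ih]
        push_cast
        simp [neg_smul]
  set T : Set (Lp ℝ 1 μ) := Set.range f with hT
  set G : AddSubgroup (Lp ℝ 1 μ) :=
    { carrier := T
      zero_mem' := ⟨[], by simp [hf]⟩
      add_mem' := by
        rintro a b ⟨l₁, rfl⟩ ⟨l₂, rfl⟩
        exact ⟨l₁ ++ l₂, hf_add l₁ l₂⟩
      neg_mem' := by
        rintro a ⟨l, rfl⟩
        exact ⟨l.map fun p => (-p.1, p.2), hf_neg l⟩ } with hG
  have hdense : Dense T := by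
    rw [dense_iff_closure_eq]
    apply Set.eq_univ_of_forall
    intro x
    refine Lp.induction (μ := μ) (E := ℝ) ENNReal.one_ne_top
      (fun y => y ∈ closure T) ?_ ?_ isClosed_closure x
    · intro c s hs hμs
      rw [Lp.simpleFunc.coe_indicatorConst]
      rw [indLp_const_eq_smul hs c]
      -- approximate `c • indLp s` by `q • indLp A`
      rw [Metric.mem_closure_iff]
      intro ε hε
      set M : ℝ := (μ Set.univ).toReal + 1 with hM
      have hM0 : 0 < M := by positivity
      obtain ⟨q, hq⟩ := exists_rat_near c (show (0:ℝ) < ε / (4 * M) by positivity)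
      have hq1 : |(q:ℝ)| ≤ |c| + ε / (4 * M) := by
        have := abs_sub_abs_le_abs_sub (q : ℝ) c
        rw [abs_sub_comm] at hq
        nlinarith [abs_nonneg (c - (q:ℝ))]
      set ε₂ : ℝ := ε / (4 * (|(q:ℝ)| + 1)) with hε₂
      have hε₂0 : 0 < ε₂ := by positivity
      obtain ⟨A, hAD, hAd⟩ := happ s hs (ENNReal.ofReal ε₂) (by simp [hε₂0])
      refine ⟨f [(q, ⟨A, hAD⟩)], ⟨[(q, ⟨A, hAD⟩)], rfl⟩, ?_⟩
      have hfval : f [(q, ⟨A, hAD⟩)] = (q:ℝ) • g ⟨A, hAD⟩ := by simp [hf]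
      rw [hfval, dist_eq_norm]
      have hdecomp : c • indLp μ hs - (q:ℝ) • g ⟨A, hAD⟩ =
          (c - (q:ℝ)) • indLp μ hs + (q:ℝ) • (indLp μ hs - g ⟨A, hAD⟩) := by
        rw [smul_sub, sub_smul]; abel
      rw [hdecomp]
      have hb1 : ‖(c - (q:ℝ)) • indLp μ hs‖ ≤ ε / (4 * M) * (μ Set.univ).toReal := by
        rw [norm_smul]
        have := norm_indLp_le (μ := μ) hs
        have habs : ‖c - (q:ℝ)‖ ≤ ε / (4 * M) := by
          rw [Real.norm_eq_abs]; exact hq.le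
        exact mul_le_mul habs this (norm_nonneg _) (by positivity)
      have hb2 : ‖(q:ℝ) • (indLp μ hs - g ⟨A, hAD⟩)‖ ≤ |(q:ℝ)| * ε₂ := by
        rw [norm_smul, Real.norm_eq_abs]
        refine mul_le_mul_of_nonneg_left ?_ (abs_nonneg _)
        refine (norm_indLp_sub_le hs (hmeas A hAD)).trans ?_
        exact ENNReal.toReal_le_of_le_ofReal hε₂0.le hAd
      calc ‖(c - (q:ℝ)) • indLp μ hs + (q:ℝ) • (indLp μ hs - g ⟨A, hAD⟩)‖
          ≤ ‖(c - (q:ℝ)) • indLp μ hs‖ + ‖(q:ℝ) • (indLp μ hs - g ⟨A, hAD⟩)‖ := norm_add_le _ _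
        _ ≤ ε / (4 * M) * (μ Set.univ).toReal + |(q:ℝ)| * ε₂ := add_le_add hb1 hb2
        _ < ε := by
            have h1 : ε / (4 * M) * (μ Set.univ).toReal < ε / 2 := by
              have hlt : (μ Set.univ).toReal < M := by simp [hM]
              have h4 : ε / (4 * M) * (μ Set.univ).toReal ≤ ε / (4 * M) * M := by
                refine mul_le_mul_of_nonneg_left hlt.le (by positivity)
              have : ε / (4 * M) * M = ε / 4 := by field_simp
              nlinarith
            have h2 : |(q:ℝ)| * ε₂ < ε / 2 := by
              have hlt2 : |(q:ℝ)| < |(q:ℝ)| + 1 := by linarith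
              have h5 : |(q:ℝ)| * ε₂ < (|(q:ℝ)| + 1) * ε₂ := by nlinarith
              have h6 : (|(q:ℝ)| + 1) * ε₂ = ε / 4 := by
                rw [hε₂]; field_simp
              nlinarith
            linarith
    · intro f₁ f₂ hf₁ hf₂ _ h₁ h₂
      have : closure T = (G.topologicalClosure : Set (Lp ℝ 1 μ)) := rfl
      rw [this] at h₁ h₂ ⊢
      exact add_mem h₁ h₂
  have hTle : #T ≤ max ℵ₀ #D := by
    have hprod : #(ℚ × ↥D) ≤ max ℵ₀ #↥D := by
      have h1 : #(ℚ × ↥D) ≤ ℵ₀ * #↥D := by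
        rw [Cardinal.mk_prod]
        have hQ2 : #ℚ = ℵ₀ := Cardinal.mk_eq_aleph0 ℚ
        simp [hQ2]
      refine h1.trans ((Cardinal.mul_le_max _ _).trans ?_)
      rw [max_comm (max ℵ₀ #↥D) ℵ₀]
      rw [← max_assoc]
      simp
    refine Cardinal.mk_range_le.trans ((Cardinal.mk_list_le_max _).trans ?_)
    exact max_le (le_max_left _ _) (hprod.trans le_rfl)
  refine le_trans (csInf_le (OrderBot.bddBelow _) ⟨T, hdense, rfl⟩) hTle
lemma mk_iUnion_nat_le {α : Type*} (f : ℕ → Set α) :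
    #(⋃ n, f n) ≤ ℵ₀ * ⨆ n, #(f n) := by
  have hsurj : Function.Surjective
      (fun x : Σ n : ℕ, ↥(f n) => (⟨x.2.1, Set.mem_iUnion.mpr ⟨x.1, x.2.2⟩⟩ : ↥(⋃ n, f n))) := by
    rintro ⟨y, hy⟩
    obtain ⟨n, hn⟩ := Set.mem_iUnion.mp hy
    exact ⟨⟨n, ⟨y, hn⟩⟩, rfl⟩
  refine (Cardinal.mk_le_of_surjective hsurj).trans ?_
  rw [Cardinal.mk_sigma]
  refine (Cardinal.sum_le_lift_mk_mul_iSup _).trans ?_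
  rw [Cardinal.mk_nat, Cardinal.lift_aleph0]

lemma densityCharacter_le_iUnion (D : ℕ → Set (Set K))
    (hcd : ∀ n : ℕ, CD μ Set.univ ((n : ℝ≥0∞) + 1)⁻¹ (D n)) :
    densityCharacter (Lp ℝ 1 μ) ≤ max ℵ₀ (⨆ n, #(D n)) := by
  have hmeas : ∀ A ∈ ⋃ n, D n, MeasurableSet A := by
    intro A hA
    obtain ⟨n, hn⟩ := Set.mem_iUnion.mp hA
    exact ((hcd n).1 A hn).1
  have happ : ∀ E : Set K, MeasurableSet E → ∀ cc : ℝ≥0∞, 0 < cc →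
      ∃ A ∈ ⋃ n, D n, μ (E ∆ A) ≤ cc := by
    intro E hE cc hcc
    obtain ⟨n, hn⟩ := ENNReal.exists_inv_nat_lt hcc.ne'
    obtain ⟨A, hA, hd⟩ := (hcd n).2 E hE (Set.subset_univ E)
    refine ⟨A, Set.mem_iUnion.mpr ⟨n, hA⟩, hd.trans (le_trans ?_ hn.le)⟩
    exact ENNReal.inv_le_inv.mpr (by simp)
  refine (densityCharacter_le_of_family hmeas happ).trans ?_
  refine max_le (le_max_left _ _) ?_
  refine (mk_iUnion_nat_le D).trans ?_
  refine (Cardinal.mul_le_max _ _).trans ?_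
  refine max_le (max_le ?_ ?_) (le_max_left _ _)
  · exact le_max_left _ _
  · exact le_max_right _ _

lemma Q_univ_of_regular {lam : Cardinal} (hlam : ℵ₀ < lam)
    (hreg : lam.IsRegular) (hle : lam ≤ densityCharacter (Lp ℝ 1 μ)) :
    Q μ (Set.univ : Set K) lam := by
  by_contra hnQ
  rw [not_Q_iff] at hnQ
  have hD : ∀ n : ℕ, ∃ D : Set (Set K),
      CD μ Set.univ ((n : ℝ≥0∞) + 1)⁻¹ D ∧ #D < lam := by
    intro n
    exact hnQ _ (ENNReal.inv_pos.mpr (by simp))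
  choose D hDcd hDlt using hD
  have h1 := densityCharacter_le_iUnion D hDcd
  have hsuplt : (⨆ n, #(D n)) < lam :=
    Cardinal.iSup_lt_lift_of_isRegular hreg
      (by rw [Cardinal.mk_nat, Cardinal.lift_aleph0]; exact hlam) hDlt
  exact absurd (hle.trans h1) (not_le.mpr (max_lt hlam hsuplt))

end Transfer



section Topo

variable [TopologicalSpace K] [CompactSpace K] [T2Space K] [BorelSpace K]
variable [μ.Regular]

lemma exists_fn [IsFiniteMeasure μ] {E : Set K} (hE : MeasurableSet E) {η : ℝ≥0∞} (hη : 0 < η)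
    (h2η : η + η < μ Set.univ) :
    ∃ (f : C(K, ℝ)) (F G : Set K), IsCompact F ∧ F ⊆ E ∧ μ (E \ F) ≤ η ∧
      IsCompact G ∧ G ⊆ Eᶜ ∧ μ (Eᶜ \ G) ≤ η ∧
      (∀ x ∈ F, f x = 1) ∧ (∀ x ∈ G, f x = -1) ∧ (∀ x, |f x| ≤ 1) ∧ ‖f‖ = 1 := by
  obtain ⟨F, hFE, hFc, hFd⟩ := hE.exists_isCompact_diff_lt (measure_ne_top μ E) hη.ne'
  obtain ⟨G, hGE, hGc, hGd⟩ := hE.compl.exists_isCompact_diff_lt (measure_ne_top μ _) hη.ne'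
  have hdisj : Disjoint G F := by
    refine Set.disjoint_left.mpr fun x hxG hxF => ?_
    exact (hGE hxG) (hFE hxF)
  obtain ⟨f₀, hf₀G, hf₀F, hf₀range⟩ :=
    exists_continuous_zero_one_of_isClosed hGc.isClosed hFc.isClosed hdisj
  set f : C(K, ℝ) := (2 : ℝ) • f₀ - 1 with hfdef
  have hfx : ∀ x, f x = 2 * f₀ x - 1 := by
    intro x
    simp [hfdef]
  have hfF : ∀ x ∈ F, f x = 1 := by
    intro x hx
    rw [hfx x, hf₀F hx]
    norm_num
  have hfG : ∀ x ∈ G, f x = -1 := by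
    intro x hx
    rw [hfx x, hf₀G hx]
    norm_num
  have hfb : ∀ x, |f x| ≤ 1 := by
    intro x
    rw [hfx x]
    have h1 := (hf₀range x).1
    have h2 := (hf₀range x).2
    rw [abs_le]
    constructor <;> nlinarith
  have hnonempty : (F ∪ G).Nonempty := by
    rw [Set.nonempty_iff_ne_empty]
    intro hFG
    obtain ⟨hF0, hG0⟩ := Set.union_empty_iff.mp hFG
    have hsub : (Set.univ : Set K) ⊆ (E \ F) ∪ (Eᶜ \ G) := by
      intro x _
      have hxF : x ∉ F := by rw [hF0]; exact Set.notMem_empty x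
      have hxG : x ∉ G := by rw [hG0]; exact Set.notMem_empty x
      by_cases hxE : x ∈ E
      · exact Or.inl ⟨hxE, hxF⟩
      · exact Or.inr ⟨hxE, hxG⟩
    have := (measure_mono (μ := μ) hsub).trans (measure_union_le _ _)
    exact absurd (this.trans (add_le_add hFd.le hGd.le)) (not_le.mpr h2η)
  have hnorm : ‖f‖ = 1 := by
    refine le_antisymm ?_ ?_
    · rw [ContinuousMap.norm_le f zero_le_one]
      intro x
      rw [Real.norm_eq_abs]
      exact hfb x
    · obtain ⟨x, hx⟩ := hnonempty
      have : |f x| = 1 := by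
        rcases hx with hx | hx
        · rw [hfF x hx]; norm_num
        · rw [hfG x hx]; norm_num
      calc (1:ℝ) = ‖f x‖ := by rw [Real.norm_eq_abs, this]
        _ ≤ ‖f‖ := f.norm_coe_le_norm x
  exact ⟨f, F, G, hFc, hFE, hFd.le, hGc, hGE, hGd.le, hfF, hfG, hfb, hnorm⟩

lemma sep_of_cross {E E' F G' : Set K} {η η' : ℝ≥0∞}
    {f f' : C(K, ℝ)}
    (hFE : F ⊆ E) (hFd : μ (E \ F) ≤ η)
    (hG'E : G' ⊆ E'ᶜ) (hG'd : μ (E'ᶜ \ G') ≤ η')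
    (hfF : ∀ x ∈ F, f x = 1) (hf'G : ∀ x ∈ G', f' x = -1)
    (hcross : η + η' < μ (E \ E')) : (2:ℝ) ≤ ‖f - f'‖ := by
  have hne : (F ∩ G').Nonempty := by
    rw [Set.nonempty_iff_ne_empty]
    intro hFG
    have hsub : E \ E' ⊆ (E \ F) ∪ (E'ᶜ \ G') := by
      intro x hx
      by_cases hxF : x ∈ F
      · refine Or.inr ⟨hx.2, fun hxG => ?_⟩
        exact Set.eq_empty_iff_forall_notMem.mp hFG x ⟨hxF, hxG⟩
      · exact Or.inl ⟨hx.1, hxF⟩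
    have := (measure_mono (μ := μ) hsub).trans (measure_union_le _ _)
    exact absurd (this.trans (add_le_add hFd hG'd)) (not_le.mpr hcross)
  obtain ⟨x, hxF, hxG'⟩ := hne
  calc (2:ℝ) = ‖(f - f') x‖ := by
        have : (f - f') x = f x - f' x := by simp
        rw [this, hfF x hxF, hf'G x hxG']
        norm_num
    _ ≤ ‖f - f'‖ := (f - f').norm_coe_le_norm x

lemma assembly [IsFiniteMeasure μ] (hμ0 : 0 < μ Set.univ)
    (S : ℕ → Set K) (hSmeas : ∀ n, MeasurableSet (S n))
    (hSdis : Pairwise (Function.onFun Disjoint S))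
    (c : ℕ → ℝ≥0∞) (hc0 : ∀ n, 0 < c n) (hcK : ∀ n, c n ≤ μ Set.univ / 2)
    (τ : ℕ → Cardinal) (hτ : ∀ n, τ n = 0 ∨ ℵ₀ ≤ τ n)
    (hQc : ∀ n (Df : Set (Set K)), CD μ (S n) (c n) Df → τ n ≤ #Df)
    (κ : Cardinal) (hκinf : ℵ₀ ≤ κ) (hsup : κ ≤ ⨆ n, (τ n ⊓ κ))
    (δ : ℝ) (hδ1 : δ ≤ 1) :
    ∃ A : Set C(K, ℝ), #A = κ ∧ (∀ f ∈ A, ‖f‖ = 1) ∧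
      ∀ f ∈ A, ∀ g ∈ A, f ≠ g → 1 + δ ≤ ‖f - g‖ := by
  classical
  have hμfin : μ Set.univ ≠ ∞ := measure_ne_top μ _
  -- maximal separated families via Zorn
  have hMn : ∀ n : ℕ, ∃ M : Set (Set K),
      ((∀ A ∈ M, MeasurableSet A ∧ A ⊆ S n) ∧ ∅ ∈ M ∧
        M.Pairwise fun A B => c n < μ (A ∆ B)) ∧ CD μ (S n) (c n) M := by
    intro n
    set Sc : Set (Set (Set K)) := {M | (∀ A ∈ M, MeasurableSet A ∧ A ⊆ S n) ∧ ∅ ∈ M ∧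
      M.Pairwise fun A B => c n < μ (A ∆ B)} with hSc
    have hch : ∀ ch ⊆ Sc, IsChain (· ⊆ ·) ch → ch.Nonempty →
        ∃ ub ∈ Sc, ∀ s ∈ ch, s ⊆ ub := by
      intro ch hsub hchain hne
      refine ⟨⋃₀ ch, ⟨?_, ?_, ?_⟩, fun s hs => Set.subset_sUnion_of_mem hs⟩
      · rintro A ⟨M, hM, hAM⟩
        exact (hsub hM).1 A hAM
      · obtain ⟨M, hM⟩ := hne
        exact ⟨M, hM, (hsub hM).2.1⟩
      · rintro A ⟨M₁, hM₁, hAM₁⟩ B ⟨M₂, hM₂, hBM₂⟩ hAB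
        rcases hchain.total hM₁ hM₂ with h | h
        · exact (hsub hM₂).2.2 (h hAM₁) hBM₂ hAB
        · exact (hsub hM₁).2.2 hAM₁ (h hBM₂) hAB
    have hstart : ({∅} : Set (Set K)) ∈ Sc := by
      refine ⟨?_, rfl, Set.pairwise_singleton _ _⟩
      intro A hA
      rw [Set.mem_singleton_iff] at hA
      subst hA
      exact ⟨MeasurableSet.empty, Set.empty_subset _⟩
    obtain ⟨M, _, hMmax⟩ := zorn_subset_nonempty Sc hch _ hstart
    refine ⟨M, hMmax.1, hMmax.1.1, ?_⟩
    intro E hE hES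
    by_contra hnone
    push_neg at hnone
    have hEM : insert E M ∈ Sc := by
      refine ⟨?_, Set.mem_insert_of_mem _ hMmax.1.2.1, ?_⟩
      · rintro A (rfl | hA)
        exacts [⟨hE, hES⟩, hMmax.1.1 A hA]
      · rw [Set.pairwise_insert]
        refine ⟨hMmax.1.2.2, fun B hB _ => ⟨?_, ?_⟩⟩
        · exact hnone B hB
        · rw [symmDiff_comm]
          exact hnone B hB
    have hsub' : insert E M ⊆ M := hMmax.2 hEM (Set.subset_insert E M)
    have hEinM : E ∈ M := hsub' (Set.mem_insert E M)
    exact absurd (hnone E hEinM) (by simp [symmDiff_self])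
  choose M hMS hMcd using hMn
  have hMτ : ∀ n, τ n ≤ #(M n) := fun n => hQc n (M n) (hMcd n)
  set M₀ : ℕ → Set (Set K) := fun n => M n \ {∅} with hM₀
  have hM₀c : ∀ n, ∀ A ∈ M₀ n, c n < μ A := by
    intro n A hA
    have h := (hMS n).2.2 hA.1 (hMS n).2.1 (fun h => hA.2 (by simp [h]))
    have he : A ∆ (∅ : Set K) = A := by simp
    have h' : c n < μ (A ∆ (∅ : Set K)) := h
    rwa [he] at h'
  have hM₀τ : ∀ n, τ n ⊓ κ ≤ #(M₀ n) := by
    intro n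
    rcases hτ n with h0 | hinf
    · simp [h0]
    · refine le_trans inf_le_left ?_
      by_contra hlt
      push_neg at hlt
      have h1 : #(M n) ≤ #(M₀ n) + 1 := by
        have hss : M n ⊆ M₀ n ∪ {∅} := by
          intro A hA
          by_cases hA0 : A = ∅
          · exact Or.inr (by simp [hA0])
          · exact Or.inl ⟨hA, hA0⟩
        refine (Cardinal.mk_le_mk_of_subset hss).trans ?_
        refine (Cardinal.mk_union_le _ _).trans ?_
        simp
      have h2 : #(M₀ n) + 1 < τ n :=
        Cardinal.add_lt_of_lt hinf hlt (lt_of_lt_of_le Cardinal.one_lt_aleph0 hinf)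
      exact absurd (hMτ n) (not_le.mpr (lt_of_le_of_lt h1 h2))
  have hMf : ∀ n, ∃ P : Set (Set K), P ⊆ M₀ n ∧ #P = τ n ⊓ κ := fun n =>
    Cardinal.le_mk_iff_exists_subset.mp (hM₀τ n)
  choose Mf hMfsub hMfcard using hMf
  -- slack sequence
  set m : ℕ → ℝ≥0∞ := (fun n => Nat.rec (c 0) (fun k mk => min mk (c (k+1))) n) with hm
  have hmsucc : ∀ n, m (n+1) = min (m n) (c (n+1)) := fun n => rfl
  have hmpos : ∀ n, 0 < m n := by
    intro n
    induction n with
    | zero => exact hc0 0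
    | succ k ih => rw [hmsucc]; exact lt_min ih (hc0 _)
  have hmle : ∀ j n, j ≤ n → m n ≤ c j := by
    intro j n hjn
    induction n with
    | zero =>
        have hj : j = 0 := Nat.le_zero.mp hjn
        subst hj; exact le_rfl
    | succ k ih =>
        rcases Nat.eq_or_lt_of_le hjn with h | h
        · subst h; rw [hmsucc]; exact min_le_right _ _
        · rw [hmsucc]; exact (min_le_left _ _).trans (ih (by omega))
  have hmanti : ∀ j n, j ≤ n → m n ≤ m j := by
    intro j n hjn
    induction n with
    | zero =>
        have hj : j = 0 := Nat.le_zero.mp hjn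
        subst hj; exact le_rfl
    | succ k ih =>
        rcases Nat.eq_or_lt_of_le hjn with h | h
        · subst h; exact le_rfl
        · rw [hmsucc]; exact (min_le_left _ _).trans (ih (by omega))
  set η : ℕ → ℝ≥0∞ := fun n => m n / 2 / 2 with hη
  have hηpos : ∀ n, 0 < η n := fun n =>
    ENNReal.half_pos (ENNReal.half_pos (hmpos n).ne').ne'
  have hηkey : ∀ n n' j, j ≤ n → j ≤ n' → η n + η n' ≤ c j / 2 := by
    intro n n' j h1 h2
    have e : ∀ k, j ≤ k → η k ≤ m j / 2 / 2 := fun k hk =>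
      ENNReal.div_le_div_right (ENNReal.div_le_div_right (hmanti j k hk) 2) 2
    calc η n + η n' ≤ m j / 2 / 2 + m j / 2 / 2 := add_le_add (e n h1) (e n' h2)
      _ = m j / 2 := ENNReal.add_halves _
      _ ≤ c j / 2 := ENNReal.div_le_div_right (hmle j j le_rfl) 2
  have hη2 : ∀ n, η n + η n < μ Set.univ := by
    intro n
    calc η n + η n ≤ c n / 2 := hηkey n n n le_rfl le_rfl
      _ ≤ c n := ENNReal.half_le_self
      _ ≤ μ Set.univ / 2 := hcK n
      _ < μ Set.univ := ENNReal.half_lt_self hμ0.ne' hμfin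
  -- the functions
  have hmemM : ∀ n (A : ↥(Mf n)), A.1 ∈ M n := fun n A => (hMfsub n A.2).1
  have hfn : ∀ (n : ℕ) (A : ↥(Mf n)), ∃ (f : C(K, ℝ)) (F G : Set K),
      IsCompact F ∧ F ⊆ A.1 ∧ μ (A.1 \ F) ≤ η n ∧
      IsCompact G ∧ G ⊆ (A.1)ᶜ ∧ μ ((A.1)ᶜ \ G) ≤ η n ∧
      (∀ x ∈ F, f x = 1) ∧ (∀ x ∈ G, f x = -1) ∧ (∀ x, |f x| ≤ 1) ∧ ‖f‖ = 1 := by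
    intro n A
    exact exists_fn ((hMS n).1 A.1 (hmemM n A)).1 (hηpos n) (hη2 n)
  choose fn Ff Gf hFc hFsub hFd hGc hGsub hGd hfF hfG hfb hfnorm using hfn
  have key : ∀ i j : Σ n : ℕ, ↥(Mf n), i ≠ j → (2:ℝ) ≤ ‖fn i.1 i.2 - fn j.1 j.2‖ := by
    have main : ∀ (n1 n2 : ℕ) (A1 : ↥(Mf n1)) (B2 : ↥(Mf n2)), n1 ≠ n2 → n1 ≤ n2 →
        (2:ℝ) ≤ ‖fn n1 A1 - fn n2 B2‖ := by
      intro n1 n2 A1 B2 hne hle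
      have hA1S : A1.1 ⊆ S n1 := ((hMS n1).1 A1.1 (hmemM n1 A1)).2
      have hB2S : B2.1 ⊆ S n2 := ((hMS n2).1 B2.1 (hmemM n2 B2)).2
      have hdisj : Disjoint A1.1 B2.1 := (hSdis hne).mono hA1S hB2S
      have hdiffeq : A1.1 \ B2.1 = A1.1 :=
        sdiff_eq_self_iff_disjoint.mpr hdisj.symm
      have hcA : c n1 < μ (A1.1 \ B2.1) := by
        rw [hdiffeq]
        exact hM₀c n1 A1.1 (hMfsub n1 A1.2)
      have hηle : η n1 + η n2 < μ (A1.1 \ B2.1) :=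
        lt_of_le_of_lt (le_trans (hηkey n1 n2 n1 le_rfl hle) ENNReal.half_le_self) hcA
      exact sep_of_cross (hFsub n1 A1) (hFd n1 A1) (hGsub n2 B2) (hGd n2 B2)
        (hfF n1 A1) (hfG n2 B2) hηle
    rintro ⟨n, A⟩ ⟨n', B⟩ hij
    by_cases hnn : n = n'
    · subst hnn
      have hABne : A ≠ B := fun h => hij (by rw [h])
      have hAB : A.1 ≠ B.1 := fun h => hABne (Subtype.ext h)
      have hpair : c n < μ (A.1 ∆ B.1) :=
        (hMS n).2.2 (hmemM n A) (hmemM n B) hAB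
      have hsum : c n < μ (A.1 \ B.1) + μ (B.1 \ A.1) := by
        refine lt_of_lt_of_le hpair ?_
        rw [Set.symmDiff_def]
        exact measure_union_le _ _
      have hhalf : c n / 2 < μ (A.1 \ B.1) ∨ c n / 2 < μ (B.1 \ A.1) := by
        by_contra hcon
        push_neg at hcon
        exact absurd hsum (not_lt.mpr ((add_le_add hcon.1 hcon.2).trans_eq
          (ENNReal.add_halves _)))
      have hcross12 : η n + η n ≤ c n / 2 := hηkey n n n le_rfl le_rfl
      rcases hhalf with h | h
      · exact sep_of_cross (hFsub n A) (hFd n A) (hGsub n B) (hGd n B)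
          (hfF n A) (hfG n B) (lt_of_le_of_lt hcross12 h)
      · have := sep_of_cross (hFsub n B) (hFd n B) (hGsub n A) (hGd n A)
          (hfF n B) (hfG n A) (lt_of_le_of_lt hcross12 h)
        rwa [norm_sub_rev] at this
    · rcases le_or_gt n n' with h | h
      · exact main n n' A B hnn h
      · have := main n' n B A (Ne.symm hnn) h.le
        rwa [norm_sub_rev] at this
  set gI : (Σ n : ℕ, ↥(Mf n)) → C(K, ℝ) := fun i => fn i.1 i.2 with hgI
  have hginj : Function.Injective gI := by
    intro i j hij
    by_contra hne
    have h2 := key i j hne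
    rw [hgI] at hij
    simp only [hij] at h2
    rw [sub_self, norm_zero] at h2
    linarith
  refine ⟨Set.range gI, ?_, ?_, ?_⟩
  · rw [Cardinal.mk_range_eq gI hginj, Cardinal.mk_sigma]
    have hteq : (fun n => #↥(Mf n)) = fun n => τ n ⊓ κ := funext fun n => hMfcard n
    rw [hteq]
    refine le_antisymm ?_ ?_
    · refine (Cardinal.sum_le_lift_mk_mul_iSup _).trans ?_
      rw [Cardinal.mk_nat, Cardinal.lift_aleph0]
      have hsle : ⨆ n, (τ n ⊓ κ) ≤ κ := ciSup_le' fun n => inf_le_right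
      calc ℵ₀ * ⨆ n, (τ n ⊓ κ) ≤ ℵ₀ * κ := mul_le_mul_right hsle _
        _ = κ := by rw [Cardinal.mul_eq_max le_rfl hκinf, max_eq_right hκinf]
    · exact hsup.trans (ciSup_le' fun n => Cardinal.le_sum _ n)
  · rintro f ⟨i, rfl⟩
    exact hfnorm i.1 i.2
  · rintro f ⟨i, rfl⟩ g ⟨j, rfl⟩ hfg
    have hij : i ≠ j := fun h => hfg (by rw [h])
    have h2 := key i j hij
    have : (1:ℝ) + δ ≤ 2 := by linarith
    exact this.trans h2

end Topo


end SepL1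

open SepL1 Set
open scoped symmDiff ENNReal

/-- Let `K` be a compact Hausdorff space with a regular Borel (Radon) measure
`μ` such that `L¹(μ)` is non-separable.  Then for every `0 < δ < √2 − 1` there
is a set `A` of norm-one functions in `C(K)`, of cardinality `d(L¹(μ))`, with
`‖f − g‖ ≥ 1 + δ` for all distinct `f, g ∈ A`. -/
theorem separated_of_nonseparable_L1
    (K : Type*) [TopologicalSpace K] [CompactSpace K] [T2Space K]
    [MeasurableSpace K] [BorelSpace K]
    (μ : Measure K) [μ.Regular]
    (hnonsep : ¬ TopologicalSpace.SeparableSpace (Lp ℝ 1 μ))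
    (δ : ℝ) (hδ0 : 0 < δ) (hδ : δ < Real.sqrt 2 - 1) :
    ∃ A : Set C(K, ℝ), #A = densityCharacter (Lp ℝ 1 μ) ∧
      (∀ f ∈ A, ‖f‖ = 1) ∧
      ∀ f ∈ A, ∀ g ∈ A, f ≠ g → 1 + δ ≤ ‖f - g‖ := by
  classical
  haveI : IsFiniteMeasure μ := ⟨isCompact_univ.measure_lt_top⟩
  have hδ1 : δ ≤ 1 := by
    have h2 : Real.sqrt 2 < 2 := (Real.sqrt_lt' (by norm_num)).mpr (by norm_num)
    linarith
  set κ := densityCharacter (Lp ℝ 1 μ) with hκdef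
  have hsetne : { c : Cardinal | ∃ s : Set (Lp ℝ 1 μ), Dense s ∧ #s = c }.Nonempty :=
    ⟨#(Set.univ : Set (Lp ℝ 1 μ)), Set.univ, dense_univ, rfl⟩
  have hκinf : ℵ₀ < κ := by
    by_contra hle
    push_neg at hle
    obtain ⟨s, hsd, hsc⟩ := csInf_mem hsetne
    have hcnt : Countable ↥s := Cardinal.mk_le_aleph0_iff.mp (le_of_eq_of_le hsc hle)
    exact hnonsep ⟨⟨s, Set.countable_coe_iff.mp hcnt, hsd⟩⟩
  have hμ0 : 0 < μ Set.univ := by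
    by_contra h0
    push_neg at h0
    have hz : μ = 0 := Measure.measure_univ_eq_zero.mp (le_antisymm h0 zero_le)
    refine hnonsep ⟨⟨{0}, Set.countable_singleton 0, ?_⟩⟩
    have hall : ∀ f : Lp ℝ 1 μ, f = 0 := by
      intro f
      refine Lp.ext ?_
      have hae : MeasureTheory.ae μ = ⊥ := by rw [hz]; exact MeasureTheory.ae_zero
      show ⇑f =ᵐ[μ] ⇑(0 : Lp ℝ 1 μ)
      unfold Filter.EventuallyEq
      rw [hae]
      simp
    intro x
    rw [hall x]
    exact subset_closure (Set.mem_singleton 0)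
  have hμfin : μ Set.univ ≠ ∞ := measure_ne_top μ _
  have hhalfpos : 0 < μ Set.univ / 2 := ENNReal.half_pos hμ0.ne'
  by_cases hQK : SepL1.Q μ (Set.univ : Set K) κ
  · -- uniform case
    obtain ⟨c₀, hc₀, hQ⟩ := hQK
    obtain ⟨A, hA1, hA2, hA3⟩ := SepL1.assembly (μ := μ) hμ0
      (fun n => Nat.casesOn n Set.univ fun _ => (∅ : Set K))
      (fun n => by cases n with
        | zero => exact MeasurableSet.univ
        | succ k => exact MeasurableSet.empty)
      (by
        intro i j hij
        cases i with
        | zero =>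
            cases j with
            | zero => exact absurd rfl hij
            | succ k => exact Set.disjoint_empty _ |>.symm |>.symm |>.mono_right le_rfl
        | succ k =>
            exact Set.empty_disjoint _ |>.mono_right le_rfl)
      (fun _ => min c₀ (μ Set.univ / 2)) (fun _ => lt_min hc₀ hhalfpos)
      (fun _ => min_le_right _ _)
      (fun n => Nat.casesOn n κ fun _ => 0)
      (fun n => by cases n with
        | zero => exact Or.inr hκinf.le
        | succ k => exact Or.inl rfl)
      (by
        intro n Df hDf
        cases n with
        | zero => exact hQ Df (hDf.mono_c (min_le_left _ _))
        | succ k => exact zero_le)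
      κ hκinf.le
      (by
        have h0 : (κ ⊓ κ : Cardinal) ≤
            ⨆ n, ((fun n => Nat.casesOn n κ fun _ => 0) n ⊓ κ) :=
          le_ciSup (Cardinal.bddAbove_range _) 0
        rwa [inf_idem] at h0)
      δ hδ1
    exact ⟨A, hA1, hA2, hA3⟩
  · -- singular case
    rw [SepL1.not_Q_iff] at hQK
    have hD : ∀ n : ℕ, ∃ D : Set (Set K),
        CD μ Set.univ ((n : ℝ≥0∞) + 1)⁻¹ D ∧ #D < κ := by
      intro n
      exact hQK _ (ENNReal.inv_pos.mpr (by simp))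
    choose Dn hDncd hDnlt using hD
    set s : ℕ → Cardinal := fun n => #(Dn n) with hs
    have hsups : κ ≤ ⨆ n, s n := by
      by_contra hcon
      push_neg at hcon
      have h1 := SepL1.densityCharacter_le_iUnion (μ := μ) Dn hDncd
      exact absurd h1 (not_le.mpr (max_lt hκinf hcon))
    set a : ℕ → Cardinal := fun n => ℵ₀ ⊔ (Finset.range (n + 1)).sup s with ha
    have hsa : ∀ n, s n ≤ a n := fun n =>
      le_trans (Finset.le_sup (Finset.self_mem_range_succ n)) le_sup_right
    have hainf : ∀ n, ℵ₀ ≤ a n := fun n => le_sup_left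
    have haκ : ∀ n, a n < κ := by
      intro n
      refine max_lt hκinf ?_
      refine (Finset.sup_lt_iff (lt_of_lt_of_le Cardinal.aleph0_pos hκinf.le)).mpr ?_
      intro i _
      exact hDnlt i
    have hamono : Monotone a := by
      intro n1 n2 h
      exact sup_le_sup le_rfl (Finset.sup_mono (Finset.range_subset_range.mpr (by omega)))
    have hsucclt : ∀ n, Order.succ (a n) < κ := by
      by_contra hcon
      push_neg at hcon
      obtain ⟨n0, hk⟩ := hcon
      have he : κ = Order.succ (a n0) :=
        le_antisymm hk (Order.succ_le_of_lt (haκ n0))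
      have hsle : ∀ m, s m ≤ a n0 := by
        intro m
        have := hDnlt m
        rw [he] at this
        exact Order.lt_succ_iff.mp this
      exact absurd ((hsups.trans (ciSup_le' hsle)).trans_lt (haκ n0)) (lt_irrefl κ)
    set lamf : ℕ → Cardinal := fun n => Order.succ (a n) with hlamf
    have hlammono : Monotone lamf := fun n1 n2 h => Order.succ_le_succ (hamono h)
    have hlaminf : ∀ m, ℵ₀ < lamf m := fun m =>
      lt_of_le_of_lt (hainf m) (Order.lt_succ_of_not_isMax (not_isMax _))
    have hQlam : ∀ m, SepL1.Q μ (Set.univ : Set K) (lamf m) := fun m =>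
      SepL1.Q_univ_of_regular (hlaminf m) (Cardinal.isRegular_succ (hainf m)) (hsucclt m).le
    obtain ⟨S, hSmeas, hSdis, hQS⟩ :=
      SepL1.exists_regions hμfin hlammono hlaminf hQlam
    have hcs : ∀ n, ∃ cc : ℝ≥0∞, 0 < cc ∧
        ∀ Df : Set (Set K), CD μ (S n) cc Df → lamf n ≤ #Df := fun n => hQS n
    choose cs hcs0 hcsQ using hcs
    obtain ⟨A, hA1, hA2, hA3⟩ := SepL1.assembly (μ := μ) hμ0 S hSmeas hSdis
      (fun n => min (cs n) (μ Set.univ / 2)) (fun n => lt_min (hcs0 n) hhalfpos)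
      (fun n => min_le_right _ _)
      lamf (fun n => Or.inr (hlaminf n).le)
      (fun n Df hDf => hcsQ n Df (hDf.mono_c (min_le_left _ _)))
      κ hκinf.le
      (by
        have heq : (fun n => lamf n ⊓ κ) = lamf :=
          funext fun n => inf_eq_left.mpr (hsucclt n).le
        rw [heq]
        refine hsups.trans (ciSup_mono (Cardinal.bddAbove_range _) ?_)
        intro n
        exact (hsa n).trans (Order.le_succ _)
      )
      δ hδ1
    exact ⟨A, hA1, hA2, hA3⟩
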